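/- arXiv:1806.06751 — 9 statements merged into one kernel-verified Lean document; each statement's English description precedes it below -/
import Mathlib

section
/- For every natural number p and every integer n ≥ 1, the trace of the n-th power of the matrix A_p equals 2^p, i.e. Tr[A_p^n] = 2^p. -/
open Matrix

/-- Index type for the recursively defined block matrices `A p`,
of cardinality `2 ^ p`. -/
def IdxA : ℕ → Type
  | 0 => Fin 1
  | p + 1 => IdxA p ⊕ IdxA p

instance instFintypeIdxA : ∀ p, Fintype (IdxA p)
  | 0 => inferInstanceAs (Fintype (Fin 1))
  | p + 1 => letI := instFintypeIdxA p; inferInstanceAs (Fintype (IdxA p ⊕ IdxA p))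

instance instDecidableEqIdxA : ∀ p, DecidableEq (IdxA p)
  | 0 => inferInstanceAs (DecidableEq (Fin 1))
  | p + 1 => letI := instDecidableEqIdxA p; inferInstanceAs (DecidableEq (IdxA p ⊕ IdxA p))

/-- `A 0` is the 1×1 matrix with single entry 1, and
`A (p+1) = [[A p, (A p)ᵀ], [0, A p]]` as a 2×2 block matrix. -/
def A : (p : ℕ) → Matrix (IdxA p) (IdxA p) ℤ
  | 0 => Matrix.of fun _ _ => (1 : ℤ)
  | p + 1 => Matrix.fromBlocks (A p) (A p)ᵀ 0 (A p)


lemma pow_fromBlocks_aux {m : Type*} [Fintype m] [DecidableEq m]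
    (B C D : Matrix m m ℤ) (n : ℕ) :
    ∃ E, (fromBlocks B C 0 D) ^ n = fromBlocks (B ^ n) E 0 (D ^ n) := by
  induction n with
  | zero => exact ⟨0, by simp [fromBlocks_one]⟩
  | succ n ih =>
    obtain ⟨E, hE⟩ := ih
    refine ⟨B ^ n * C + E * D, ?_⟩
    rw [pow_succ, pow_succ, pow_succ, hE, fromBlocks_multiply]
    simp

lemma trace_fromBlocks_aux {m : Type*} [Fintype m]
    (B C Z D : Matrix m m ℤ) :
    (fromBlocks B C Z D).trace = B.trace + D.trace := by
  simp [Matrix.trace, Fintype.sum_sum_type, Matrix.diag]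

theorem trace_pow_A_eq_two_pow (p n : ℕ) (hn : 1 ≤ n) :
    Matrix.trace ((A p) ^ n) = 2 ^ p := by
  induction p with
  | zero =>
    have h : A 0 = 1 := by
      ext i j
      fin_cases i; fin_cases j
      simp [A]
      rfl
    simp [h]
    rfl
  | succ p ih =>
    obtain ⟨E, hE⟩ := pow_fromBlocks_aux (A p) (A p)ᵀ (A p) n
    show Matrix.trace ((fromBlocks (A p) (A p)ᵀ 0 (A p)) ^ n) = _
    rw [hE, trace_fromBlocks_aux, ih, pow_succ]
    ring
end

section
/- For every natural number p and every integer n ≥ 1, Tr[A_p^n · A_p^T] = (n+2)^p. -/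
open Matrix

lemma trace_fromBlocks {l m : Type*} [Fintype l] [Fintype m]
    (a : Matrix l l ℤ) (b : Matrix l m ℤ) (c : Matrix m l ℤ) (d : Matrix m m ℤ) :
    Matrix.trace (Matrix.fromBlocks a b c d) = Matrix.trace a + Matrix.trace d := by
  simp [Matrix.trace, Matrix.diag, Fintype.sum_sum_type, Matrix.fromBlocks]

/-- Off-diagonal block of `A (p+1) ^ n`. -/
def C (p n : ℕ) : Matrix (IdxA p) (IdxA p) ℤ :=
  ∑ i ∈ Finset.range n, A p ^ i * (A p)ᵀ * A p ^ (n - 1 - i)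

lemma pow_A_succ (p n : ℕ) :
    A (p + 1) ^ n = Matrix.fromBlocks (A p ^ n) (C p n) 0 (A p ^ n) := by
  induction n with
  | zero => simp [C, Matrix.fromBlocks_one]; rfl
  | succ n ih =>
    have hA : A (p + 1) = Matrix.fromBlocks (A p) (A p)ᵀ 0 (A p) := rfl
    rw [pow_succ, ih, hA]; erw [Matrix.fromBlocks_multiply]
    have hC : C p (n + 1) = C p n * A p + A p ^ n * (A p)ᵀ := by
      rw [C, Finset.sum_range_succ]
      congr 1
      · rw [C, Finset.sum_mul]
        refine Finset.sum_congr rfl fun i hi => ?_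
        rw [Finset.mem_range] at hi
        rw [mul_assoc, mul_assoc, ← pow_succ,
          show n - 1 - i + 1 = n + 1 - 1 - i from by omega, ← mul_assoc]
      · simp
    rw [hC]
    simp [← pow_succ]
    abel_nf
    rfl

lemma trace_C_mul (p n : ℕ) :
    Matrix.trace (C p n * A p) = (n : ℤ) * Matrix.trace (A p ^ n * (A p)ᵀ) := by
  rw [C, Finset.sum_mul, Matrix.trace_sum]
  have h : ∀ i ∈ Finset.range n,
      Matrix.trace (A p ^ i * (A p)ᵀ * A p ^ (n - 1 - i) * A p)
        = Matrix.trace (A p ^ n * (A p)ᵀ) := by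
    intro i hi
    rw [Finset.mem_range] at hi
    rw [mul_assoc, mul_assoc, ← pow_succ]
    have h1 : n - 1 - i + 1 = n - i := by omega
    rw [h1, Matrix.trace_mul_comm, mul_assoc, ← pow_add]
    have h2 : n - i + i = n := by omega
    rw [h2, Matrix.trace_mul_comm]
  rw [Finset.sum_congr rfl h, Finset.sum_const, Finset.card_range, nsmul_eq_mul]

lemma trace_key (p n : ℕ) :
    Matrix.trace ((A p) ^ n * (A p)ᵀ) = ((n : ℤ) + 2) ^ p := by
  induction p with
  | zero =>
    haveI : Subsingleton (IdxA 0) := inferInstanceAs (Subsingleton (Fin 1))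
    have hA : A 0 = 1 := by
      ext i j
      have : i = j := Subsingleton.elim i j
      simp [A, this, Matrix.one_apply]
    have hcard : Fintype.card (IdxA 0) = 1 := rfl
    rw [hA]
    simp [Matrix.trace_one, hcard]
  | succ p ih =>
    have hA : A (p + 1) = Matrix.fromBlocks (A p) (A p)ᵀ 0 (A p) := rfl
    rw [pow_A_succ, hA]; erw [Matrix.fromBlocks_transpose, Matrix.fromBlocks_multiply,
      trace_fromBlocks]
    simp only [Matrix.transpose_zero, Matrix.transpose_transpose, Matrix.mul_zero,
      Matrix.zero_mul, add_zero, zero_add]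
    rw [Matrix.trace_add, trace_C_mul, ih]
    ring

theorem trace_pow_A_mul_transpose (p n : ℕ) (hn : 1 ≤ n) :
    Matrix.trace ((A p) ^ n * (A p)ᵀ) = ((n : ℤ) + 2) ^ p := trace_key p n
end

section
/- For every natural number p, Tr[B_p^2] = 2·(2^p + 3^p), where B_p = A_p + A_p^T. -/
open Matrix

/-- The symmetrized transfer matrix `B p = A p + (A p)ᵀ`. -/
def B (p : ℕ) : Matrix (IdxA p) (IdxA p) ℤ := A p + (A p)ᵀ

lemma trace_fromBlocks' {n m : Type*} [Fintype n] [Fintype m]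
    (M : Matrix n n ℤ) (N : Matrix n m ℤ) (P : Matrix m n ℤ) (Q : Matrix m m ℤ) :
    Matrix.trace (Matrix.fromBlocks M N P Q) = Matrix.trace M + Matrix.trace Q := by
  simp [Matrix.trace, Matrix.diag, Fintype.sum_sum_type, Matrix.fromBlocks]

lemma trace_A_sq (p : ℕ) : Matrix.trace (A p * A p) = 2 ^ p := by
  induction p with
  | zero =>
    have hc : Fintype.card (IdxA 0) = 1 := rfl
    simp [A, Matrix.trace, Matrix.mul_apply, hc]
  | succ p ih =>
    show Matrix.trace (Matrix.fromBlocks (A p) (A p)ᵀ 0 (A p) *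
        Matrix.fromBlocks (A p) (A p)ᵀ 0 (A p)) = 2 ^ (p + 1)
    rw [Matrix.fromBlocks_multiply, trace_fromBlocks']
    simp [ih]
    ring

lemma trace_A_mul_At (p : ℕ) : Matrix.trace (A p * (A p)ᵀ) = 3 ^ p := by
  induction p with
  | zero =>
    have hc : Fintype.card (IdxA 0) = 1 := rfl
    simp [A, Matrix.trace, Matrix.mul_apply, hc]
  | succ p ih =>
    show Matrix.trace (Matrix.fromBlocks (A p) (A p)ᵀ 0 (A p) *
        (Matrix.fromBlocks (A p) (A p)ᵀ 0 (A p))ᵀ) = 3 ^ (p + 1)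
    rw [Matrix.fromBlocks_transpose, Matrix.fromBlocks_multiply,
      trace_fromBlocks']
    simp [Matrix.trace_add, ih, Matrix.trace_mul_comm (A p)ᵀ (A p)]
    ring

theorem trace_B_sq (p : ℕ) :
    Matrix.trace ((B p) ^ 2) = 2 * (2 ^ p + 3 ^ p) := by
  have h1 := trace_A_sq p
  have h2 := trace_A_mul_At p
  have h3 : Matrix.trace ((A p)ᵀ * (A p)ᵀ) = 2 ^ p := by
    rw [← Matrix.transpose_mul, Matrix.trace_transpose, h1]
  have h4 : Matrix.trace ((A p)ᵀ * A p) = 3 ^ p := by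
    rw [Matrix.trace_mul_comm, h2]
  rw [sq, B, add_mul, mul_add, mul_add, Matrix.trace_add, Matrix.trace_add,
    Matrix.trace_add, h1, h2, h3, h4]
  ring
end

section
/- The sequence (Tr[B_p^3])^{1/(3p)} = (2^{p+1} + 6·4^p)^{1/(3p)} converges to 4^{1/3} as p → ∞ (the limit taken over real numbers). -/
open Matrix

lemma trace_fromBlocks'_s9 {n m : Type} [Fintype n] [Fintype m] (X : Matrix n n ℤ)
    (Y : Matrix n m ℤ) (Z : Matrix m n ℤ) (W : Matrix m m ℤ) :
    trace (fromBlocks X Y Z W) = trace X + trace W := by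
  simp [Matrix.trace, Matrix.diag, Fintype.sum_sum_type, Matrix.fromBlocks]

lemma step3 {n : Type} [Fintype n] (M : Matrix n n ℤ) :
    trace (fromBlocks M Mᵀ 0 M * fromBlocks M Mᵀ 0 M * fromBlocks M Mᵀ 0 M)
      = 2 * trace (M * M * M) := by
  rw [fromBlocks_multiply, fromBlocks_multiply, trace_fromBlocks'_s9]
  simp only [mul_zero, zero_mul, add_zero, zero_add]
  ring

lemma step2T {n : Type} [Fintype n] (M : Matrix n n ℤ) :
    trace (fromBlocks M Mᵀ 0 M * fromBlocks M Mᵀ 0 M * (fromBlocks M Mᵀ 0 M)ᵀ)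
      = 4 * trace (M * M * Mᵀ) := by
  rw [fromBlocks_transpose, fromBlocks_multiply, fromBlocks_multiply, trace_fromBlocks'_s9]
  simp only [transpose_zero, transpose_transpose, mul_zero, zero_mul, add_zero, zero_add,
    Matrix.add_mul, Matrix.mul_add, trace_add]
  rw [trace_mul_cycle Mᵀ M M, trace_mul_cycle M Mᵀ M]
  ring

lemma key : ∀ p, trace (A p * A p * A p) = 2 ^ p ∧ trace (A p * A p * (A p)ᵀ) = 4 ^ p := by
  intro p
  induction p with
  | zero =>
    constructor <;>
    · show trace _ = _
      simp [A, Matrix.trace, Matrix.mul_apply, Matrix.diag, Matrix.transpose,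
        show (Finset.univ : Finset (IdxA 0)) = {(0 : Fin 1)} from rfl]
      decide
  | succ p ih =>
    obtain ⟨h1, h2⟩ := ih
    constructor
    · rw [show trace (A (p+1) * A (p+1) * A (p+1)) = 2 * trace (A p * A p * A p) from
        step3 (A p), h1]
      ring
    · rw [show trace (A (p+1) * A (p+1) * (A (p+1))ᵀ) = 4 * trace (A p * A p * (A p)ᵀ) from
        step2T (A p), h2]
      ring

lemma traceB (p : ℕ) : trace (B p ^ 3) = 2 * 2 ^ p + 6 * 4 ^ p := by
  obtain ⟨h1, h2⟩ := key p
  set M := A p with hM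
  have hpow : B p ^ 3 = B p * B p * B p := by rw [pow_succ, pow_succ, pow_one]
  have e3 : trace (M * Mᵀ * M) = 4 ^ p := by rw [trace_mul_cycle]; exact h2
  have e4 : trace (Mᵀ * M * M) = 4 ^ p := by rw [trace_mul_cycle, trace_mul_cycle]; exact h2
  have e5 : trace (Mᵀ * Mᵀ * Mᵀ) = 2 ^ p := by
    rw [show Mᵀ * Mᵀ * Mᵀ = (M * (M * M))ᵀ by simp [Matrix.transpose_mul, Matrix.mul_assoc],
      trace_transpose, ← Matrix.mul_assoc]
    exact h1
  have e6 : trace (M * Mᵀ * Mᵀ) = 4 ^ p := by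
    rw [show M * Mᵀ * Mᵀ = (M * (M * Mᵀ))ᵀ by simp [Matrix.transpose_mul, Matrix.mul_assoc],
      trace_transpose, ← Matrix.mul_assoc]
    exact h2
  have e7 : trace (Mᵀ * M * Mᵀ) = 4 ^ p := by
    rw [trace_mul_cycle, trace_mul_cycle]; exact e6
  have e8 : trace (Mᵀ * Mᵀ * M) = 4 ^ p := by
    rw [trace_mul_cycle]; exact e6
  rw [hpow]
  simp only [B, ← hM, Matrix.add_mul, Matrix.mul_add, trace_add]
  rw [h1, h2, e3, e4, e5, e6, e7, e8]
  ring

lemma aux_tendsto (c : ℝ) (hc : 0 < c) :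
    Filter.Tendsto (fun p : ℕ => c ^ (1 / (3 * (p : ℝ)))) Filter.atTop (nhds 1) := by
  have h0 : Filter.Tendsto (fun p : ℕ => 1 / (3 * (p : ℝ))) Filter.atTop (nhds 0) := by
    have := tendsto_one_div_atTop_nhds_zero_nat.const_mul (1/3 : ℝ)
    simp only [mul_zero] at this
    convert this using 2 with p
    field_simp
  have hcont : ContinuousAt (fun x : ℝ => c ^ x) 0 := Real.continuousAt_const_rpow hc.ne'
  have := hcont.tendsto.comp h0
  simpa [Real.rpow_zero, Function.comp_def] using this

theorem trace_B_cube_root_tendsto :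
    Filter.Tendsto
      (fun p : ℕ => ((Matrix.trace ((B p) ^ 3) : ℤ) : ℝ) ^ (1 / (3 * (p : ℝ))))
      Filter.atTop (nhds ((4 : ℝ) ^ ((1 : ℝ) / 3))) := by
  have hx : ∀ p : ℕ, ((Matrix.trace ((B p) ^ 3) : ℤ) : ℝ) = 2 * 2 ^ p + 6 * 4 ^ p := by
    intro p; rw [traceB]; push_cast; ring
  have hfourpow : ∀ p : ℕ, p ≠ 0 → ((4 : ℝ) ^ p) ^ (1 / (3 * (p : ℝ))) = (4 : ℝ) ^ ((1:ℝ)/3) := by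
    intro p hp
    rw [← Real.rpow_natCast 4 p, ← Real.rpow_mul (by norm_num)]
    congr 1
    have : (p : ℝ) ≠ 0 := Nat.cast_ne_zero.mpr hp
    field_simp
  have hlow : Filter.Tendsto (fun p : ℕ => (6:ℝ) ^ (1/(3*(p:ℝ))) * 4 ^ ((1:ℝ)/3))
      Filter.atTop (nhds ((4:ℝ) ^ ((1:ℝ)/3))) := by
    have := (aux_tendsto 6 (by norm_num)).mul_const ((4:ℝ) ^ ((1:ℝ)/3))
    simpa using this
  have hhigh : Filter.Tendsto (fun p : ℕ => (8:ℝ) ^ (1/(3*(p:ℝ))) * 4 ^ ((1:ℝ)/3))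
      Filter.atTop (nhds ((4:ℝ) ^ ((1:ℝ)/3))) := by
    have := (aux_tendsto 8 (by norm_num)).mul_const ((4:ℝ) ^ ((1:ℝ)/3))
    simpa using this
  apply tendsto_of_tendsto_of_tendsto_of_le_of_le' hlow hhigh
  · filter_upwards [Filter.eventually_ge_atTop 1] with p hp
    have hp0 : p ≠ 0 := by omega
    have hexp : (0:ℝ) ≤ 1 / (3 * (p:ℝ)) := by positivity
    have h1 : (6:ℝ) * 4 ^ p ≤ ((Matrix.trace ((B p) ^ 3) : ℤ) : ℝ) := by
      rw [hx]
      have : (0:ℝ) ≤ 2 * 2 ^ p := by positivity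
      linarith
    calc (6:ℝ) ^ (1/(3*(p:ℝ))) * 4 ^ ((1:ℝ)/3)
        = ((6:ℝ) * 4 ^ p) ^ (1/(3*(p:ℝ))) := by
          rw [Real.mul_rpow (by norm_num) (by positivity), hfourpow p hp0]
      _ ≤ _ := Real.rpow_le_rpow (by positivity) h1 hexp
  · filter_upwards [Filter.eventually_ge_atTop 1] with p hp
    have hp0 : p ≠ 0 := by omega
    have hexp : (0:ℝ) ≤ 1 / (3 * (p:ℝ)) := by positivity
    have h1 : ((Matrix.trace ((B p) ^ 3) : ℤ) : ℝ) ≤ (8:ℝ) * 4 ^ p := by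
      rw [hx]
      have : (2:ℝ) ^ p ≤ 4 ^ p := pow_le_pow_left₀ (by norm_num) (by norm_num) p
      nlinarith
    calc ((Matrix.trace ((B p) ^ 3) : ℤ) : ℝ) ^ (1/(3*(p:ℝ)))
        ≤ ((8:ℝ) * 4 ^ p) ^ (1/(3*(p:ℝ))) := by
          apply Real.rpow_le_rpow _ h1 hexp
          rw [hx]; positivity
      _ = (8:ℝ) ^ (1/(3*(p:ℝ))) * 4 ^ ((1:ℝ)/3) := by
          rw [Real.mul_rpow (by norm_num) (by positivity), hfourpow p hp0]
end

section
/- Define x_p = Tr[A_p^2 · (A_p^T)^2] and y_p = Tr[A_p · A_p^T · A_p · A_p^T]. Then x_0 = y_0 = 1, and for every natural number p, x_{p+1} = 4·x_p + 2·y_p and y_{p+1} = 4·x_p + 3·y_p. -/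
open Matrix

/-- `x p = Tr[(A p)² ((A p)ᵀ)²]`. -/
def xSeq (p : ℕ) : ℤ := Matrix.trace ((A p) ^ 2 * ((A p)ᵀ) ^ 2)

/-- `y p = Tr[A p (A p)ᵀ A p (A p)ᵀ]`. -/
def ySeq (p : ℕ) : ℤ := Matrix.trace (A p * (A p)ᵀ * A p * (A p)ᵀ)

section helpers
variable {n : Type*} [Fintype n] [DecidableEq n]

lemma trace_fromBlocks'_s10 (a : Matrix n n ℤ) (b : Matrix n n ℤ) (c : Matrix n n ℤ)
    (d : Matrix n n ℤ) :
    trace (fromBlocks a b c d) = trace a + trace d := by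
  simp [trace, Matrix.diag, fromBlocks, Fintype.sum_sum_type]

omit [DecidableEq n] in
lemma cyc (M : Matrix n n ℤ) :
    trace (M * Mᵀ * Mᵀ * M) = trace (M * M * Mᵀ * Mᵀ) ∧
    trace (Mᵀ * Mᵀ * M * M) = trace (M * M * Mᵀ * Mᵀ) ∧
    trace (Mᵀ * M * M * Mᵀ) = trace (M * M * Mᵀ * Mᵀ) ∧
    trace (Mᵀ * M * Mᵀ * M) = trace (M * Mᵀ * M * Mᵀ) := by
  set N := Mᵀ
  have c1 : trace (M*N*N*M) = trace (M*M*N*N) := by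
    rw [trace_mul_comm (M*N*N) M]; simp only [← mul_assoc]
  have c2 : trace (N*N*M*M) = trace (M*M*N*N) := by
    rw [trace_mul_comm (N*N*M) M]; simp only [← mul_assoc]; exact c1
  have c3 : trace (N*M*M*N) = trace (M*M*N*N) := by
    rw [trace_mul_comm (N*M*M) N]; simp only [← mul_assoc]; exact c2
  have c4 : trace (N*M*N*M) = trace (M*N*M*N) := by
    rw [trace_mul_comm (N*M*N) M]; simp only [← mul_assoc]
  exact ⟨c1, c2, c3, c4⟩

lemma helper_x (M : Matrix n n ℤ) :
    trace ((fromBlocks M Mᵀ 0 M) ^ 2 * ((fromBlocks M Mᵀ 0 M)ᵀ) ^ 2)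
      = 4 * trace (M ^ 2 * (Mᵀ) ^ 2) + 2 * trace (M * Mᵀ * M * Mᵀ) := by
  obtain ⟨c1, c2, c3, c4⟩ := cyc M
  simp only [pow_two, fromBlocks_transpose, transpose_zero, transpose_transpose,
    fromBlocks_multiply, Matrix.mul_add, Matrix.add_mul, Matrix.zero_mul, Matrix.mul_zero,
    add_zero, zero_add, trace_fromBlocks'_s10, trace_add, ← mul_assoc]
  linarith

lemma helper_y (M : Matrix n n ℤ) :
    trace ((fromBlocks M Mᵀ 0 M) * (fromBlocks M Mᵀ 0 M)ᵀ * (fromBlocks M Mᵀ 0 M) *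
        (fromBlocks M Mᵀ 0 M)ᵀ)
      = 4 * trace (M ^ 2 * (Mᵀ) ^ 2) + 3 * trace (M * Mᵀ * M * Mᵀ) := by
  obtain ⟨c1, c2, c3, c4⟩ := cyc M
  simp only [pow_two, fromBlocks_transpose, transpose_zero, transpose_transpose,
    fromBlocks_multiply, Matrix.mul_add, Matrix.add_mul, Matrix.zero_mul, Matrix.mul_zero,
    add_zero, zero_add, trace_fromBlocks'_s10, trace_add, ← mul_assoc]
  linarith

end helpers

theorem xSeq_ySeq_recursion :
    xSeq 0 = 1 ∧ ySeq 0 = 1 ∧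
    ∀ p : ℕ,
      xSeq (p + 1) = 4 * xSeq p + 2 * ySeq p ∧
      ySeq (p + 1) = 4 * xSeq p + 3 * ySeq p :=
  ⟨by decide, by decide, fun p => ⟨helper_x (A p), helper_y (A p)⟩⟩
end

section
/- For every natural number p, Tr[B_p^4] = 2·Tr[A_p^4] + 8·Tr[A_p^3·A_p^T] + 4·Tr[A_p^2·(A_p^T)^2] + 2·Tr[A_p·A_p^T·A_p·A_p^T], where B_p = A_p + A_p^T. Consequently Tr[B_p^4] = 2·2^p + 8·5^p + 4·x_p + 2·y_p with x_p = Tr[A_p^2·(A_p^T)^2] and y_p = Tr[A_p·A_p^T·A_p·A_p^T]. -/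
open Matrix

lemma my_trace_fromBlocks {n m R : Type*} [Fintype n] [Fintype m] [AddCommMonoid R]
    (a : Matrix n n R) (b : Matrix n m R) (c : Matrix m n R) (d : Matrix m m R) :
    Matrix.trace (Matrix.fromBlocks a b c d) = Matrix.trace a + Matrix.trace d := by
  simp [Matrix.trace, Fintype.sum_sum_type, Matrix.diag, Matrix.fromBlocks]

lemma my_cyc4 {n : Type*} [Fintype n] (X Y Z W : Matrix n n ℤ) :
    Matrix.trace (X * Y * Z * W) = Matrix.trace (W * X * Y * Z) := by
  rw [Matrix.trace_mul_comm]
  simp [Matrix.mul_assoc]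

lemma my_trans4 {n : Type*} [Fintype n] (X Y Z W : Matrix n n ℤ) :
    Matrix.trace (X * Y * Z * W) = Matrix.trace (Wᵀ * Zᵀ * Yᵀ * Xᵀ) := by
  rw [← Matrix.trace_transpose (X * Y * Z * W)]
  simp [Matrix.transpose_mul, Matrix.mul_assoc]

lemma my_step4 {n : Type*} [Fintype n] [DecidableEq n] (a : Matrix n n ℤ) :
    Matrix.trace ((Matrix.fromBlocks a aᵀ 0 a) ^ 4) = 2 * Matrix.trace (a ^ 4) := by
  have h : (Matrix.fromBlocks a aᵀ 0 a) ^ 4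
      = Matrix.fromBlocks (a*a*a*a)
          (a*a*a*aᵀ + (a*a*aᵀ + (a*aᵀ + aᵀ*a)*a)*a) 0 (a*a*a*a) := by
    simp only [pow_succ, pow_zero, Matrix.one_mul, one_mul, Matrix.fromBlocks_multiply,
      Matrix.mul_zero, Matrix.zero_mul, add_zero, zero_add, Matrix.mul_one]
  rw [h, my_trace_fromBlocks]
  have hp : a ^ 4 = a*a*a*a := by rw [pow_succ, pow_succ, pow_succ, pow_one]
  rw [hp]; ring

lemma my_step3 {n : Type*} [Fintype n] [DecidableEq n] (a : Matrix n n ℤ) :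
    Matrix.trace ((Matrix.fromBlocks a aᵀ 0 a) ^ 3 * (Matrix.fromBlocks a aᵀ 0 a)ᵀ)
      = 5 * Matrix.trace (a ^ 3 * aᵀ) := by
  have h : (Matrix.fromBlocks a aᵀ 0 a) ^ 3 * (Matrix.fromBlocks a aᵀ 0 a)ᵀ
      = Matrix.fromBlocks
          (a*a*a*aᵀ + (a*a*aᵀ + (a*aᵀ + aᵀ*a)*a)*a)
          ((a*a*aᵀ + (a*aᵀ + aᵀ*a)*a)*aᵀ)
          (a*a*a*a) (a*a*a*aᵀ) := by
    simp only [pow_succ, pow_zero, Matrix.one_mul, one_mul, Matrix.fromBlocks_transpose,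
      Matrix.transpose_zero, Matrix.transpose_transpose, Matrix.fromBlocks_multiply,
      Matrix.mul_zero, Matrix.zero_mul, add_zero, zero_add, Matrix.mul_one]
  rw [h, my_trace_fromBlocks]
  have e1 : Matrix.trace (a*a*aᵀ*a) = Matrix.trace (a*a*a*aᵀ) := my_cyc4 a a aᵀ a
  have e2 : Matrix.trace (a*aᵀ*a*a) = Matrix.trace (a*a*a*aᵀ) := (my_cyc4 a aᵀ a a).trans e1
  have e3 : Matrix.trace (aᵀ*a*a*a) = Matrix.trace (a*a*a*aᵀ) := (my_cyc4 aᵀ a a a).trans e2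
  have hp : a ^ 3 * aᵀ = a*a*a*aᵀ := by rw [pow_succ, pow_succ, pow_one]
  rw [hp]
  simp only [Matrix.add_mul, Matrix.trace_add]
  linarith [e1, e2, e3]

lemma A0_eq : A 0 = 1 := by
  ext i j
  have hs : Subsingleton (IdxA 0) := inferInstanceAs (Subsingleton (Fin 1))
  have : i = j := Subsingleton.elim i j
  simp [A, this, Matrix.one_apply]

lemma card_IdxA0 : Fintype.card (IdxA 0) = 1 := rfl

lemma trA4 : ∀ p, Matrix.trace ((A p) ^ 4) = 2 ^ p := by
  intro p
  induction p with
  | zero => rw [A0_eq, one_pow]; simp [card_IdxA0]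
  | succ p ih =>
      have hc : Matrix.trace ((A (p+1)) ^ 4)
          = Matrix.trace (((Matrix.fromBlocks (A p) (A p)ᵀ 0 (A p) :
              Matrix (IdxA p ⊕ IdxA p) (IdxA p ⊕ IdxA p) ℤ)) ^ 4) := rfl
      rw [hc, my_step4, ih]
      ring

lemma trA3T : ∀ p, Matrix.trace ((A p) ^ 3 * (A p)ᵀ) = 5 ^ p := by
  intro p
  induction p with
  | zero => rw [A0_eq]; simp [card_IdxA0]
  | succ p ih =>
      have hc : Matrix.trace ((A (p+1)) ^ 3 * (A (p+1))ᵀ)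
          = Matrix.trace (((Matrix.fromBlocks (A p) (A p)ᵀ 0 (A p) :
              Matrix (IdxA p ⊕ IdxA p) (IdxA p ⊕ IdxA p) ℤ)) ^ 3
            * ((Matrix.fromBlocks (A p) (A p)ᵀ 0 (A p) :
              Matrix (IdxA p ⊕ IdxA p) (IdxA p ⊕ IdxA p) ℤ))ᵀ) := rfl
      rw [hc, my_step3, ih]
      ring

theorem trace_B_fourth (p : ℕ) :
    Matrix.trace ((B p) ^ 4) =
        2 * Matrix.trace ((A p) ^ 4) + 8 * Matrix.trace ((A p) ^ 3 * (A p)ᵀ)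
          + 4 * Matrix.trace ((A p) ^ 2 * ((A p)ᵀ) ^ 2)
          + 2 * Matrix.trace (A p * (A p)ᵀ * A p * (A p)ᵀ) ∧
    Matrix.trace ((B p) ^ 4) = 2 * 2 ^ p + 8 * 5 ^ p + 4 * xSeq p + 2 * ySeq p := by
  set a := A p with ha
  set t := (A p)ᵀ with ht
  have hexp : (a + t)^4 =
      a*a*a*a + a*a*a*t + a*a*t*a + a*a*t*t + a*t*a*a + a*t*a*t + a*t*t*a + a*t*t*t
      + t*a*a*a + t*a*a*t + t*a*t*a + t*a*t*t + t*t*a*a + t*t*a*t + t*t*t*a + t*t*t*t := by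
    noncomm_ring
  have htt : tᵀ = a := by rw [ht, Matrix.transpose_transpose, ha]
  have e1 : Matrix.trace (a*a*t*a) = Matrix.trace (a*a*a*t) := my_cyc4 a a t a
  have e2 : Matrix.trace (a*t*a*a) = Matrix.trace (a*a*a*t) := (my_cyc4 a t a a).trans e1
  have e3 : Matrix.trace (t*a*a*a) = Matrix.trace (a*a*a*t) := (my_cyc4 t a a a).trans e2
  have f0 : Matrix.trace (t*t*t*a) = Matrix.trace (a*a*a*t) := by
    rw [my_trans4, htt, ← ht]; exact e3
  have f1 : Matrix.trace (t*t*a*t) = Matrix.trace (a*a*a*t) := by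
    rw [my_trans4, htt, ← ht]; exact e2
  have f2 : Matrix.trace (t*a*t*t) = Matrix.trace (a*a*a*t) := by
    rw [my_trans4, htt, ← ht]; exact e1
  have f3 : Matrix.trace (a*t*t*t) = Matrix.trace (a*a*a*t) := by
    rw [my_trans4, htt, ← ht]
  have g0 : Matrix.trace (t*t*t*t) = Matrix.trace (a*a*a*a) := by
    rw [my_trans4, htt]
  have k1 : Matrix.trace (a*t*t*a) = Matrix.trace (a*a*t*t) := my_cyc4 a t t a
  have k2 : Matrix.trace (t*t*a*a) = Matrix.trace (a*a*t*t) := (my_cyc4 t t a a).trans k1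
  have k3 : Matrix.trace (t*a*a*t) = Matrix.trace (a*a*t*t) := (my_cyc4 t a a t).trans k2
  have m1 : Matrix.trace (t*a*t*a) = Matrix.trace (a*t*a*t) := my_cyc4 t a t a
  have hp1 : a^4 = a*a*a*a := by rw [pow_succ, pow_succ, pow_succ, pow_one]
  have hp2 : a^3 * t = a*a*a*t := by rw [pow_succ, pow_succ, pow_one]
  have hp3 : a^2 * t^2 = a*a*t*t := by
    rw [pow_two, pow_two, Matrix.mul_assoc, ← Matrix.mul_assoc, ← Matrix.mul_assoc]
  have key : Matrix.trace ((B p) ^ 4) =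
      2 * Matrix.trace (a ^ 4) + 8 * Matrix.trace (a ^ 3 * t)
        + 4 * Matrix.trace (a ^ 2 * t ^ 2) + 2 * Matrix.trace (a * t * a * t) := by
    show Matrix.trace ((a + t) ^ 4) = _
    rw [hexp, hp1, hp2, hp3]
    simp only [Matrix.trace_add]
    linarith [e1, e2, e3, f0, f1, f2, f3, g0, k1, k2, k3, m1]
  refine ⟨key, ?_⟩
  rw [key, trA4 p, trA3T p]
  rfl
end

section
/- Let k ≥ 2 be an integer and let l₁, l₂, l₃ be nonzero elements of ZMod k with l₁+l₂+l₃ = 0. Define g : ZMod k × ZMod k → ℤ by g(a,l) = k-2 if a + l = 0 and g(a,l) = -1 otherwise. Then the sum of g(a₁,l₁)·g(a₂,l₂)·g(a₃,l₃) over all quadruples (a₁,a₂,a₃,a₄) of nonzero elements of ZMod k with a₁+a₂+a₃+a₄ = 0 equals (k-2) - 2(k-2)^2 - (k-2)^3 + 2. In particular this sum is zero when k = 3 and nonzero for every k > 3. -/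
set_option maxHeartbeats 1000000

private def dl {k : ℕ} (p a : ZMod k) : ℤ := if a = p then 1 else 0
private def dD {k : ℕ} (p q : ZMod k) : ℤ := if p = q then 1 else 0

private lemma sum_dl {k : ℕ} [NeZero k] (p : ZMod k) : ∑ a : ZMod k, dl p a = 1 := by
  simp [dl, Finset.sum_ite_eq']

private lemma sum_dl2 {k : ℕ} [NeZero k] (p q : ZMod k) :
    ∑ a : ZMod k, dl p a * dl q a = dD p q := by
  simp only [dl, dD, ite_mul, one_mul, zero_mul]
  rw [Finset.sum_ite_eq']
  simp

private lemma sum_dl3 {k : ℕ} [NeZero k] (p q c : ZMod k) :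
    ∑ a : ZMod k, dl p a * (dl q a * dl c a) = dD p q * dD p c := by
  simp only [dl, dD, ite_mul, one_mul, zero_mul, mul_ite, mul_one, mul_zero]
  rw [Finset.sum_ite_eq']
  simp only [Finset.mem_univ, if_true]
  split_ifs <;> subst_vars <;> simp_all

private lemma sum_dl4 {k : ℕ} [NeZero k] (p q c t : ZMod k) :
    ∑ a : ZMod k, dl p a * (dl q a * (dl c a * dl t a)) = dD p q * (dD p c * dD p t) := by
  simp only [dl, dD, ite_mul, one_mul, zero_mul, mul_ite, mul_one, mul_zero]
  rw [Finset.sum_ite_eq']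
  simp only [Finset.mem_univ, if_true]
  split_ifs <;> subst_vars <;> simp_all

private lemma sum_one {k : ℕ} [NeZero k] : ∑ _a : ZMod k, (1 : ℤ) = (k : ℤ) := by
  simp [Finset.card_univ]

private lemma sum_two {k : ℕ} [NeZero k] (p c : ZMod k) (x : ℤ) :
    ∑ a : ZMod k, (1 - dl p a) * (-1 + x * dl c a)
      = -(k : ℤ) + x + 1 - x * dD p c := by
  have pw : ∀ a : ZMod k, (1 - dl p a) * (-1 + x * dl c a)
      = -1 + x * dl c a + dl p a - x * (dl p a * dl c a) := by intro a; ring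
  rw [Finset.sum_congr rfl fun a _ => pw a]
  simp only [Finset.sum_add_distrib, Finset.sum_sub_distrib, ← Finset.mul_sum,
    sum_dl, sum_dl2, Finset.sum_neg_distrib, sum_one]
  ring

private lemma sum_four {k : ℕ} [NeZero k] (p q c t : ZMod k) (x : ℤ) :
    ∑ a : ZMod k, (1 - dl p a) * (1 - dl q a) * (-1 + x * dl c a) * (-1 + x * dl t a)
    = (k : ℤ) - 2 + dD p q - 2*x
      + x * (dD p c + dD p t + dD q c + dD q t - dD p q * dD p c - dD p q * dD p t)
      + x^2 * (dD c t - dD p c * dD p t - dD q c * dD q t + dD p q * (dD p c * dD p t)) := by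
  have pw : ∀ a : ZMod k, (1 - dl p a) * (1 - dl q a) * (-1 + x * dl c a) * (-1 + x * dl t a)
      = 1 - x * dl c a - x * dl t a + x^2 * (dl c a * dl t a)
        - dl p a + x * (dl p a * dl c a) + x * (dl p a * dl t a)
        - x^2 * (dl p a * (dl c a * dl t a))
        - dl q a + x * (dl q a * dl c a) + x * (dl q a * dl t a)
        - x^2 * (dl q a * (dl c a * dl t a))
        + dl p a * dl q a - x * (dl p a * (dl q a * dl c a)) - x * (dl p a * (dl q a * dl t a))
        + x^2 * (dl p a * (dl q a * (dl c a * dl t a))) := by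
    intro a; ring
  rw [Finset.sum_congr rfl fun a _ => pw a]
  simp only [Finset.sum_add_distrib, Finset.sum_sub_distrib, ← Finset.mul_sum,
    sum_dl, sum_dl2, sum_dl3, sum_dl4, sum_one]
  ring

section pieces
variable {k : ℕ} [NeZero k] (l₁ l₂ l₃ : ZMod k)

private lemma collapse4 (a₁ a₂ a₃ : ZMod k) :
    (∑ a₄ : ZMod k,
      if a₁ ≠ 0 ∧ a₂ ≠ 0 ∧ a₃ ≠ 0 ∧ a₄ ≠ 0 ∧ a₁ + a₂ + a₃ + a₄ = 0 then
        (if a₁ + l₁ = 0 then (k : ℤ) - 2 else -1) *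
        (if a₂ + l₂ = 0 then (k : ℤ) - 2 else -1) *
        (if a₃ + l₃ = 0 then (k : ℤ) - 2 else -1) else 0)
    = (if a₁ ≠ 0 ∧ a₂ ≠ 0 ∧ a₃ ≠ 0 ∧ a₁ + a₂ + a₃ ≠ 0 then
        (if a₁ + l₁ = 0 then (k : ℤ) - 2 else -1) *
        (if a₂ + l₂ = 0 then (k : ℤ) - 2 else -1) *
        (if a₃ + l₃ = 0 then (k : ℤ) - 2 else -1) else 0) := by
  have key : ∀ a₄ : ZMod k,
      (a₁ ≠ 0 ∧ a₂ ≠ 0 ∧ a₃ ≠ 0 ∧ a₄ ≠ 0 ∧ a₁ + a₂ + a₃ + a₄ = 0) ↔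
      (a₄ = -(a₁ + a₂ + a₃) ∧ (a₁ ≠ 0 ∧ a₂ ≠ 0 ∧ a₃ ≠ 0 ∧ a₁ + a₂ + a₃ ≠ 0)) := by
    intro a₄
    constructor
    · rintro ⟨x1, x2, x3, x4, x5⟩
      have h4 : a₄ = -(a₁ + a₂ + a₃) := by linear_combination x5
      exact ⟨h4, x1, x2, x3, fun h => x4 (by rw [h4, h, neg_zero])⟩
    · rintro ⟨h4, x1, x2, x3, x5⟩
      subst h4
      exact ⟨x1, x2, x3, fun h => x5 (by simpa using neg_eq_zero.mp h), by ring⟩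
  simp only [key, ite_and]
  rw [Finset.sum_ite_eq']
  simp only [Finset.mem_univ, if_true, ← ite_and, true_and]

private lemma splitIte {F : ℤ} {P1 P2 P3 s : Prop}
    [Decidable P1] [Decidable P2] [Decidable P3] [Decidable s] :
    (if P1 ∧ P2 ∧ P3 ∧ ¬s then F else 0)
    = (if P1 ∧ P2 ∧ P3 then F else 0) - (if P1 ∧ P2 ∧ P3 ∧ s then F else 0) := by
  by_cases s <;> by_cases P1 <;> by_cases P2 <;> by_cases P3 <;> simp [*]

private lemma lemA (l : ZMod k) (hl0 : l ≠ 0) :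
    ∑ a : ZMod k, (if a ≠ 0 then (if a + l = 0 then (k : ℤ) - 2 else -1) else 0) = 0 := by
  have pw : ∀ a : ZMod k,
      (if a ≠ 0 then (if a + l = 0 then (k : ℤ) - 2 else -1) else 0)
      = (1 - dl 0 a) * (-1 + ((k : ℤ) - 1) * dl (-l) a) := by
    intro a
    have r : (a + l = 0) ↔ (a = -l) := by
      constructor <;> intro h <;> linear_combination h
    simp only [r, dl]
    split_ifs <;> first | ring1 | tauto
  rw [Finset.sum_congr rfl fun a _ => pw a, sum_two 0 (-l) ((k : ℤ) - 1)]
  have hd : dD (0 : ZMod k) (-l) = 0 := by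
    have : ¬((0 : ZMod k) = -l) := fun h => hl0 (by linear_combination h)
    simp [dD, this]
  rw [hd]; ring

private lemma pfA (a₁ a₂ a₃ : ZMod k) :
    (if a₁ ≠ 0 ∧ a₂ ≠ 0 ∧ a₃ ≠ 0 then
        (if a₁ + l₁ = 0 then (k : ℤ) - 2 else -1) *
        (if a₂ + l₂ = 0 then (k : ℤ) - 2 else -1) *
        (if a₃ + l₃ = 0 then (k : ℤ) - 2 else -1) else 0)
    = (if a₁ ≠ 0 then (if a₁ + l₁ = 0 then (k : ℤ) - 2 else -1) else 0) *
      ((if a₂ ≠ 0 then (if a₂ + l₂ = 0 then (k : ℤ) - 2 else -1) else 0) *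
       (if a₃ ≠ 0 then (if a₃ + l₃ = 0 then (k : ℤ) - 2 else -1) else 0)) := by
  split_ifs <;> first | ring1 | tauto

private lemma hA :
    (∑ a₁ : ZMod k, ∑ a₂ : ZMod k, ∑ a₃ : ZMod k,
      (if a₁ ≠ 0 ∧ a₂ ≠ 0 ∧ a₃ ≠ 0 then
        (if a₁ + l₁ = 0 then (k : ℤ) - 2 else -1) *
        (if a₂ + l₂ = 0 then (k : ℤ) - 2 else -1) *
        (if a₃ + l₃ = 0 then (k : ℤ) - 2 else -1) else 0))
    = (∑ a₁ : ZMod k, (if a₁ ≠ 0 then (if a₁ + l₁ = 0 then (k : ℤ) - 2 else -1) else 0)) *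
      ((∑ a₂ : ZMod k, (if a₂ ≠ 0 then (if a₂ + l₂ = 0 then (k : ℤ) - 2 else -1) else 0)) *
       (∑ a₃ : ZMod k, (if a₃ ≠ 0 then (if a₃ + l₃ = 0 then (k : ℤ) - 2 else -1) else 0))) := by
  simp only [pfA, ← Finset.mul_sum, ← Finset.sum_mul]

private lemma collapse3 (a₁ a₂ : ZMod k) :
    (∑ a₃ : ZMod k,
      if a₁ ≠ 0 ∧ a₂ ≠ 0 ∧ a₃ ≠ 0 ∧ a₁ + a₂ + a₃ = 0 then
        (if a₁ + l₁ = 0 then (k : ℤ) - 2 else -1) *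
        (if a₂ + l₂ = 0 then (k : ℤ) - 2 else -1) *
        (if a₃ + l₃ = 0 then (k : ℤ) - 2 else -1) else 0)
    = (if a₁ ≠ 0 ∧ a₂ ≠ 0 ∧ a₁ + a₂ ≠ 0 then
        (if a₁ + l₁ = 0 then (k : ℤ) - 2 else -1) *
        (if a₂ + l₂ = 0 then (k : ℤ) - 2 else -1) *
        (if -(a₁ + a₂) + l₃ = 0 then (k : ℤ) - 2 else -1) else 0) := by
  have key : ∀ a₃ : ZMod k,
      (a₁ ≠ 0 ∧ a₂ ≠ 0 ∧ a₃ ≠ 0 ∧ a₁ + a₂ + a₃ = 0) ↔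
      (a₃ = -(a₁ + a₂) ∧ (a₁ ≠ 0 ∧ a₂ ≠ 0 ∧ a₁ + a₂ ≠ 0)) := by
    intro a₃
    constructor
    · rintro ⟨x1, x2, x3, x4⟩
      have h3 : a₃ = -(a₁ + a₂) := by linear_combination x4
      exact ⟨h3, x1, x2, fun h => x3 (by rw [h3, h, neg_zero])⟩
    · rintro ⟨h3, x1, x2, x4⟩
      subst h3
      exact ⟨x1, x2, fun h => x4 (by simpa using neg_eq_zero.mp h), by ring⟩
  simp only [key, ite_and]
  rw [Finset.sum_ite_eq']
  simp

private lemma factorB (a₁ a₂ : ZMod k) :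
    (if a₁ ≠ 0 ∧ a₂ ≠ 0 ∧ a₁ + a₂ ≠ 0 then
        (if a₁ + l₁ = 0 then (k : ℤ) - 2 else -1) *
        (if a₂ + l₂ = 0 then (k : ℤ) - 2 else -1) *
        (if -(a₁ + a₂) + l₃ = 0 then (k : ℤ) - 2 else -1) else 0)
    = (if a₁ ≠ 0 then (if a₁ + l₁ = 0 then (k : ℤ) - 2 else -1) else 0) *
      (if a₂ ≠ 0 ∧ a₁ + a₂ ≠ 0 then
        (if a₂ + l₂ = 0 then (k : ℤ) - 2 else -1) *
        (if -(a₁ + a₂) + l₃ = 0 then (k : ℤ) - 2 else -1) else 0) := by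
  split_ifs <;> first | ring1 | tauto

private lemma pwG (a₁ a₂ : ZMod k) :
    (if a₂ ≠ 0 ∧ a₁ + a₂ ≠ 0 then
        (if a₂ + l₂ = 0 then (k : ℤ) - 2 else -1) *
        (if -(a₁ + a₂) + l₃ = 0 then (k : ℤ) - 2 else -1) else 0)
    = (1 - dl 0 a₂) * (1 - dl (-a₁) a₂) *
      (-1 + ((k : ℤ) - 1) * dl (-l₂) a₂) * (-1 + ((k : ℤ) - 1) * dl (l₃ - a₁) a₂) := by
  have r1 : (a₁ + a₂ = 0) ↔ (a₂ = -a₁) := by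
    constructor <;> intro h <;> linear_combination h
  have r2 : (a₂ + l₂ = 0) ↔ (a₂ = -l₂) := by
    constructor <;> intro h <;> linear_combination h
  have r3 : (-(a₁ + a₂) + l₃ = 0) ↔ (a₂ = l₃ - a₁) := by
    constructor <;> intro h <;> linear_combination -h
  simp only [r1, r2, r3, dl]
  split_ifs <;> first | ring1 | tauto

private lemma hGsum (a₁ : ZMod k) :
    (∑ a₂ : ZMod k,
      (if a₂ ≠ 0 ∧ a₁ + a₂ ≠ 0 then
        (if a₂ + l₂ = 0 then (k : ℤ) - 2 else -1) *
        (if -(a₁ + a₂) + l₃ = 0 then (k : ℤ) - 2 else -1) else 0))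
    = (k : ℤ) - 2 + dD 0 (-a₁) - 2*((k : ℤ) - 1)
      + ((k : ℤ) - 1) * (dD 0 (-l₂) + dD 0 (l₃ - a₁) + dD (-a₁) (-l₂) + dD (-a₁) (l₃ - a₁)
          - dD 0 (-a₁) * dD 0 (-l₂) - dD 0 (-a₁) * dD 0 (l₃ - a₁))
      + ((k : ℤ) - 1)^2 * (dD (-l₂) (l₃ - a₁) - dD 0 (-l₂) * dD 0 (l₃ - a₁)
          - dD (-a₁) (-l₂) * dD (-a₁) (l₃ - a₁)
          + dD 0 (-a₁) * (dD 0 (-l₂) * dD 0 (l₃ - a₁))) := by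
  rw [Finset.sum_congr rfl fun a₂ _ => pwG l₂ l₃ a₁ a₂]
  exact sum_four 0 (-a₁) (-l₂) (l₃ - a₁) ((k : ℤ) - 1)

private lemma pwH (h₁ : l₁ ≠ 0) (h₂ : l₂ ≠ 0) (h₃ : l₃ ≠ 0)
    (hl : l₁ + l₂ + l₃ = 0) (a₁ : ZMod k) :
    (if a₁ ≠ 0 then (if a₁ + l₁ = 0 then (k : ℤ) - 2 else -1) else 0) *
    ((k : ℤ) - 2 + dD 0 (-a₁) - 2*((k : ℤ) - 1)
      + ((k : ℤ) - 1) * (dD 0 (-l₂) + dD 0 (l₃ - a₁) + dD (-a₁) (-l₂) + dD (-a₁) (l₃ - a₁)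
          - dD 0 (-a₁) * dD 0 (-l₂) - dD 0 (-a₁) * dD 0 (l₃ - a₁))
      + ((k : ℤ) - 1)^2 * (dD (-l₂) (l₃ - a₁) - dD 0 (-l₂) * dD 0 (l₃ - a₁)
          - dD (-a₁) (-l₂) * dD (-a₁) (l₃ - a₁)
          + dD 0 (-a₁) * (dD 0 (-l₂) * dD 0 (l₃ - a₁))))
    = (k : ℤ) - ((k : ℤ) - 1) * dl l₂ a₁ - ((k : ℤ) - 1) * dl l₃ a₁
      + (((k : ℤ) - 1)^3 - (k : ℤ)*((k : ℤ) - 1) - ((k : ℤ) - 1)^2) * dl (-l₁) a₁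
      - (k : ℤ) * dl 0 a₁ := by
  have e12 : -l₁ ≠ l₂ := fun h => h₃ (by linear_combination hl + h)
  have e13 : -l₁ ≠ l₃ := fun h => h₂ (by linear_combination hl + h)
  have n1 : -l₁ ≠ 0 := neg_ne_zero.mpr h₁
  have d1 : dD (0 : ZMod k) (-a₁) = (if a₁ = 0 then 1 else 0) := by
    have : ((0 : ZMod k) = -a₁) ↔ (a₁ = 0) := by
      constructor <;> intro h <;> linear_combination h
    simp only [dD, this]
  have d2 : dD (0 : ZMod k) (-l₂) = 0 := by
    have : ¬((0 : ZMod k) = -l₂) := fun h => h₂ (by linear_combination h)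
    simp [dD, this]
  have d3 : dD (0 : ZMod k) (l₃ - a₁) = (if a₁ = l₃ then 1 else 0) := by
    have : ((0 : ZMod k) = l₃ - a₁) ↔ (a₁ = l₃) := by
      constructor <;> intro h <;> linear_combination h
    simp only [dD, this]
  have d4 : dD (-a₁ : ZMod k) (-l₂) = (if a₁ = l₂ then 1 else 0) := by
    have : ((-a₁ : ZMod k) = -l₂) ↔ (a₁ = l₂) := by
      constructor <;> intro h <;> linear_combination -h
    simp only [dD, this]
  have d5 : dD (-a₁ : ZMod k) (l₃ - a₁) = 0 := by
    have : ¬((-a₁ : ZMod k) = l₃ - a₁) := fun h => h₃ (by linear_combination -h)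
    simp [dD, this]
  have d6 : dD (-l₂ : ZMod k) (l₃ - a₁) = (if a₁ = -l₁ then 1 else 0) := by
    have : ((-l₂ : ZMod k) = l₃ - a₁) ↔ (a₁ = -l₁) :=
      ⟨fun h => by linear_combination h + hl, fun h => by linear_combination h - hl⟩
    simp only [dD, this]
  have rf : (a₁ + l₁ = 0) ↔ (a₁ = -l₁) := by
    constructor <;> intro h <;> linear_combination h
  rw [d1, d2, d3, d4, d5, d6]
  simp only [rf, dl]
  split_ifs <;> first | ring1 | tauto | (exfalso; subst_vars; simp_all)

end pieces

/-- Contribution of a vertex with three incident edges in a non-Eulerian graph: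
with `g a l = k - 2` if `a + l = 0` and `-1` otherwise, the sum of
`g a₁ l₁ * g a₂ l₂ * g a₃ l₃` over all quadruples of nonzero elements of
`ZMod k` summing to zero equals `(k-2) - 2(k-2)² - (k-2)³ + 2`, which vanishes
for `k = 3` and is nonzero for `k > 3`. -/
theorem nonEulerian_vertex_contribution (k : ℕ) (hk : 2 ≤ k)
    (l₁ l₂ l₃ : ZMod k) (h₁ : l₁ ≠ 0) (h₂ : l₂ ≠ 0) (h₃ : l₃ ≠ 0)
    (hl : l₁ + l₂ + l₃ = 0) :
    letI : NeZero k := ⟨by omega⟩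
    (∑ a ∈ Finset.univ.filter
        (fun a : ZMod k × ZMod k × ZMod k × ZMod k =>
          a.1 ≠ 0 ∧ a.2.1 ≠ 0 ∧ a.2.2.1 ≠ 0 ∧ a.2.2.2 ≠ 0 ∧
          a.1 + a.2.1 + a.2.2.1 + a.2.2.2 = 0),
        (if a.1 + l₁ = 0 then (k : ℤ) - 2 else -1) *
        (if a.2.1 + l₂ = 0 then (k : ℤ) - 2 else -1) *
        (if a.2.2.1 + l₃ = 0 then (k : ℤ) - 2 else -1))
      = ((k : ℤ) - 2) - 2 * ((k : ℤ) - 2) ^ 2 - ((k : ℤ) - 2) ^ 3 + 2 ∧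
    (k = 3 → ((k : ℤ) - 2) - 2 * ((k : ℤ) - 2) ^ 2 - ((k : ℤ) - 2) ^ 3 + 2 = 0) ∧
    (3 < k → ((k : ℤ) - 2) - 2 * ((k : ℤ) - 2) ^ 2 - ((k : ℤ) - 2) ^ 3 + 2 ≠ 0) := by
  haveI : NeZero k := ⟨by omega⟩
  refine ⟨?_, ?_, ?_⟩
  · rw [Finset.sum_filter, Fintype.sum_prod_type]
    simp only [Fintype.sum_prod_type]
    simp only [collapse4 l₁ l₂ l₃]
    simp only [splitIte, Finset.sum_sub_distrib]
    rw [hA l₁ l₂ l₃, lemA l₃ h₃]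
    simp only [mul_zero, zero_sub]
    simp only [collapse3 l₁ l₂ l₃, factorB l₁ l₂ l₃, ← Finset.mul_sum]
    rw [Finset.sum_congr rfl fun a₁ _ => by
      rw [hGsum l₂ l₃ a₁, pwH l₁ l₂ l₃ h₁ h₂ h₃ hl a₁]]
    simp only [Finset.sum_add_distrib, Finset.sum_sub_distrib, ← Finset.mul_sum,
      sum_dl, Finset.sum_const, Finset.card_univ, ZMod.card, nsmul_eq_mul]
    push_cast
    ring
  · rintro rfl; norm_num
  · intro h3 heq
    have h4 : (4 : ℤ) ≤ (k : ℤ) := by exact_mod_cast h3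
    nlinarith [heq, h4]
end

section
/- Let k ≥ 2 be an integer, let V_k be the (finite) set of quadruples ξ = (ξ₁,ξ₂,ξ₃,ξ₄) of nonzero elements of ZMod k with ξ₁+ξ₂+ξ₃+ξ₄ = 0, and let a be the integer matrix indexed by V_k with a(ξ,ξ') = k-2 if ξ₁ + ξ'₃ = 0 and a(ξ,ξ') = -1 otherwise. Then for every integer i ≥ 1 and all ξ, ξ' ∈ V_k: the (ξ,ξ') entry of the matrix power a^i equals (k-1)^{i-1}·(k-2) if ξ₁ + ξ'₃ = 0, and equals -(k-1)^{i-1} otherwise. -/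
/-- The set of allowed vertex configurations: quadruples of nonzero edge states
in `ZMod k` summing to zero. -/
abbrev VertexConfig (k : ℕ) : Type :=
  {ξ : ZMod k × ZMod k × ZMod k × ZMod k //
    ξ.1 ≠ 0 ∧ ξ.2.1 ≠ 0 ∧ ξ.2.2.1 ≠ 0 ∧ ξ.2.2.2 ≠ 0 ∧
    ξ.1 + ξ.2.1 + ξ.2.2.1 + ξ.2.2.2 = 0}

/-- The normalized compatibility matrix: entry `k - 2` when configurations
`ξ, ξ'` are compatible (i.e. `ξ₁ + ξ'₃ = 0`), and `-1` otherwise. -/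
def compatMat (k : ℕ) : Matrix (VertexConfig k) (VertexConfig k) ℤ :=
  Matrix.of fun ξ ξ' => if ξ.val.1 + ξ'.val.2.2.1 = 0 then (k : ℤ) - 2 else -1

section Aux

variable {k : ℕ} [NeZero k]

lemma sum_decomp3 (f : ZMod k → ℤ) (c0 c1 c2 c3 : ℤ) (p q : ZMod k)
    (h : ∀ y, f y = c0 + (if y = 0 then c1 else 0) + (if y = p then c2 else 0)
        + (if y = q then c3 else 0)) :
    ∑ y : ZMod k, f y = c0 * k + c1 + c2 + c3 := by
  simp only [h, Finset.sum_add_distrib, Finset.sum_const, Finset.card_univ, ZMod.card,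
    Finset.sum_ite_eq' Finset.univ, Finset.mem_univ, if_true, nsmul_eq_mul]
  ring

lemma Bsum (x y : ZMod k) :
    ∑ b : ZMod k, (if b ≠ 0 ∧ x + b + y ≠ 0 then (1:ℤ) else 0)
      = if x + y = 0 then (k:ℤ)-1 else (k:ℤ)-2 := by
  have key : ∀ b : ZMod k, (x + b + y = 0) ↔ (b = -(x+y)) := by
    intro b
    constructor
    · intro h; linear_combination h
    · intro h; linear_combination h
  have cond : ∀ b : ZMod k, (b ≠ 0 ∧ x + b + y ≠ 0) ↔ (b ≠ 0 ∧ b ≠ -(x+y)) := by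
    intro b; rw [Ne, Ne, Ne, key]
  simp only [cond]
  by_cases hxy : x + y = 0
  · rw [if_pos hxy, sum_decomp3 _ 1 (-1) 0 0 0 0 ?_]
    · ring
    · intro b
      simp only [hxy, neg_zero, and_self, ite_self, add_zero]
      by_cases h0 : b = 0 <;> simp [h0]
  · rw [if_neg hxy, sum_decomp3 _ 1 (-1) (-1) 0 (-(x+y)) 0 ?_]
    · ring
    · intro b
      simp only [ite_self, add_zero]
      by_cases h0 : b = 0
      · rw [if_neg (by simp [h0]), if_pos h0,
          if_neg (by rw [h0]; intro h; exact hxy (by linear_combination h))]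
        ring
      · rw [if_neg h0]
        by_cases h1 : b = -(x+y)
        · rw [if_neg (by simp [h1]), if_pos h1]; ring
        · rw [if_pos ⟨h0, h1⟩, if_neg h1]; ring

lemma Ysum (x s : ZMod k) (hx : x ≠ 0) (hs : s ≠ 0) :
    ∑ y : ZMod k, (if y ≠ 0 then
        (if x + y = 0 then (k:ℤ)-1 else (k:ℤ)-2) * (if s + y = 0 then (k:ℤ)-2 else -1)
      else 0) = if x = s then (k:ℤ)-2 else -1 := by
  have key : ∀ (a y : ZMod k), (a + y = 0) ↔ (y = -a) := by
    intro a y; rw [add_eq_zero_iff_neg_eq, eq_comm]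
  by_cases hxs : x = s
  · subst hxs
    rw [if_pos rfl,
      sum_decomp3 _ (-((k:ℤ)-2)) ((k:ℤ)-2) ((k:ℤ)*((k:ℤ)-2)) 0 (-x) 0 ?_]
    · ring
    · intro y
      simp only [key, ite_self, add_zero]
      by_cases h0 : y = 0
      · rw [if_neg (by simp [h0]), if_pos h0, if_neg (by simp [h0, hx] : ¬ y = -x)]
        ring
      · rw [if_pos h0, if_neg h0]
        by_cases h1 : y = -x
        · rw [if_pos h1, if_pos h1, if_pos h1]; ring
        · rw [if_neg h1, if_neg h1, if_neg h1]; ring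
  · rw [if_neg hxs,
      sum_decomp3 _ (-((k:ℤ)-2)) ((k:ℤ)-2) (-1) (((k:ℤ)-1)*((k:ℤ)-2)) (-x) (-s) ?_]
    · ring
    · intro y
      simp only [key]
      by_cases h0 : y = 0
      · rw [if_neg (by simp [h0]), if_pos h0, if_neg (by simp [h0, hx] : ¬ y = -x),
          if_neg (by simp [h0, hs] : ¬ y = -s)]
        ring
      · rw [if_pos h0, if_neg h0]
        by_cases h1 : y = -x
        · have h2 : ¬ y = -s := by
            rw [h1]; intro h; exact hxs (by rw [neg_inj] at h; exact h)
          rw [if_pos h1, if_pos h1, if_neg h2, if_neg h2]; ring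
        · rw [if_neg h1, if_neg h1]
          by_cases h2 : y = -s
          · rw [if_pos h2, if_pos h2]; ring
          · rw [if_neg h2, if_neg h2]; ring

lemma Xsum (s t : ZMod k) (hs : s ≠ 0) (ht : t ≠ 0) :
    ∑ x : ZMod k, (if x ≠ 0 then
        (if x = s then (k:ℤ)-2 else -1) * (if x + t = 0 then (k:ℤ)-2 else -1)
      else 0) = if s + t = 0 then ((k:ℤ)-1)*((k:ℤ)-2) else -((k:ℤ)-1) := by
  have key : ∀ x : ZMod k, (x + t = 0) ↔ (x = -t) := by
    intro x; constructor <;> intro h <;> linear_combination h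
  by_cases hst : s + t = 0
  · have hts : (-t : ZMod k) = s := by linear_combination -hst
    rw [if_pos hst,
      sum_decomp3 _ 1 (-1) (((k:ℤ)-2)^2 - 1) 0 s 0 ?_]
    · ring
    · intro x
      simp only [key, hts, ite_self, add_zero]
      by_cases h0 : x = 0
      · rw [if_neg (by simp [h0]), if_pos h0,
          if_neg (by rw [h0]; exact fun h => hs h.symm)]
        ring
      · rw [if_pos h0, if_neg h0]
        by_cases h1 : x = s
        · rw [if_pos h1, if_pos h1]; ring
        · rw [if_neg h1, if_neg h1]; ring
  · rw [if_neg hst,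
      sum_decomp3 _ 1 (-1) (-((k:ℤ)-1)) (-((k:ℤ)-1)) s (-t) ?_]
    · ring
    · intro x
      simp only [key]
      by_cases h0 : x = 0
      · rw [if_neg (by simp [h0]), if_pos h0,
          if_neg (by rw [h0]; exact fun h => hs h.symm),
          if_neg (by rw [h0]; intro h; exact ht (by linear_combination h))]
        ring
      · rw [if_pos h0, if_neg h0]
        by_cases h1 : x = s
        · have h2 : ¬ x = -t := by
            rw [h1]; intro h; exact hst (by linear_combination h)
          rw [if_pos h1, if_pos h1, if_neg h2, if_neg h2]; ring
        · rw [if_neg h1, if_neg h1]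
          by_cases h2 : x = -t
          · rw [if_pos h2, if_pos h2]; ring
          · rw [if_neg h2, if_neg h2]; ring

lemma keySum (s t : ZMod k) (hs : s ≠ 0) (ht : t ≠ 0) :
    ∑ ξ : VertexConfig k,
      (if s + ξ.val.2.2.1 = 0 then (k:ℤ)-2 else -1) *
      (if ξ.val.1 + t = 0 then (k:ℤ)-2 else -1)
    = if s + t = 0 then ((k:ℤ)-1)*((k:ℤ)-2) else -((k:ℤ)-1) := by
  classical
  have h0 := Finset.sum_subtype
    (F := (inferInstance : Fintype (VertexConfig k)))
    (p := fun z : ZMod k × ZMod k × ZMod k × ZMod k =>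
      z.1 ≠ 0 ∧ z.2.1 ≠ 0 ∧ z.2.2.1 ≠ 0 ∧ z.2.2.2 ≠ 0 ∧
        z.1 + z.2.1 + z.2.2.1 + z.2.2.2 = 0)
    (Finset.univ.filter fun z : ZMod k × ZMod k × ZMod k × ZMod k =>
      z.1 ≠ 0 ∧ z.2.1 ≠ 0 ∧ z.2.2.1 ≠ 0 ∧ z.2.2.2 ≠ 0 ∧
        z.1 + z.2.1 + z.2.2.1 + z.2.2.2 = 0)
    (fun z => by simp)
    (fun z => (if s + z.2.2.1 = 0 then (k:ℤ)-2 else -1) * (if z.1 + t = 0 then (k:ℤ)-2 else -1))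
  rw [← h0, Finset.sum_filter]
  simp only [Fintype.sum_prod_type]
  have hd : ∀ (x b y : ZMod k) (E : ℤ),
      (∑ d : ZMod k, if x ≠ 0 ∧ b ≠ 0 ∧ y ≠ 0 ∧ d ≠ 0 ∧ x + b + y + d = 0 then E else 0)
        = if x ≠ 0 ∧ b ≠ 0 ∧ y ≠ 0 ∧ x + b + y ≠ 0 then E else 0 := by
    intro x b y E
    have hiff : ∀ d : ZMod k,
        (x ≠ 0 ∧ b ≠ 0 ∧ y ≠ 0 ∧ d ≠ 0 ∧ x + b + y + d = 0)
          ↔ (d = -(x+b+y) ∧ (x ≠ 0 ∧ b ≠ 0 ∧ y ≠ 0 ∧ x + b + y ≠ 0)) := by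
      intro d
      constructor
      · rintro ⟨h1, h2, h3, h4, h5⟩
        have hdv : d = -(x+b+y) := by linear_combination h5
        exact ⟨hdv, h1, h2, h3, fun hc => h4 (by rw [hdv, hc, neg_zero])⟩
      · rintro ⟨hdv, h1, h2, h3, h4⟩
        refine ⟨h1, h2, h3, ?_, by rw [hdv]; ring⟩
        rw [hdv, Ne, neg_eq_zero]; exact h4
    simp only [hiff, ite_and]
    rw [Finset.sum_ite_eq' Finset.univ]
    simp [ite_and]
  have hb : ∀ (x y : ZMod k) (E : ℤ),
      (∑ b : ZMod k, if x ≠ 0 ∧ b ≠ 0 ∧ y ≠ 0 ∧ x + b + y ≠ 0 then E else 0)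
        = if x ≠ 0 ∧ y ≠ 0 then (if x + y = 0 then (k:ℤ)-1 else (k:ℤ)-2) * E else 0 := by
    intro x y E
    by_cases hx : x = 0
    · simp [hx]
    by_cases hy : y = 0
    · simp [hy]
    have hcond : ∀ b : ZMod k,
        (x ≠ 0 ∧ b ≠ 0 ∧ y ≠ 0 ∧ x + b + y ≠ 0) ↔ (b ≠ 0 ∧ x + b + y ≠ 0) := by
      intro b; constructor
      · rintro ⟨_, h2, _, h4⟩; exact ⟨h2, h4⟩
      · rintro ⟨h2, h4⟩; exact ⟨hx, h2, hy, h4⟩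
    simp only [hcond, if_pos (⟨hx, hy⟩ : x ≠ 0 ∧ y ≠ 0)]
    have hpt : ∀ b : ZMod k,
        (if b ≠ 0 ∧ x + b + y ≠ 0 then E else 0)
          = (if b ≠ 0 ∧ x + b + y ≠ 0 then (1:ℤ) else 0) * E := by
      intro b; split_ifs <;> ring
    rw [Finset.sum_congr rfl fun b _ => hpt b, ← Finset.sum_mul, Bsum]
  have hy : ∀ x : ZMod k,
      (∑ y : ZMod k, if x ≠ 0 ∧ y ≠ 0 then
          (if x + y = 0 then (k:ℤ)-1 else (k:ℤ)-2) *
            ((if s + y = 0 then (k:ℤ)-2 else -1) * (if x + t = 0 then (k:ℤ)-2 else -1))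
        else 0)
      = if x ≠ 0 then
          (if x = s then (k:ℤ)-2 else -1) * (if x + t = 0 then (k:ℤ)-2 else -1) else 0 := by
    intro x
    by_cases hx : x = 0
    · simp [hx]
    rw [if_pos hx]
    have hpt : ∀ y : ZMod k,
        (if x ≠ 0 ∧ y ≠ 0 then
          (if x + y = 0 then (k:ℤ)-1 else (k:ℤ)-2) *
            ((if s + y = 0 then (k:ℤ)-2 else -1) * (if x + t = 0 then (k:ℤ)-2 else -1))
        else 0)
        = (if y ≠ 0 then
            (if x + y = 0 then (k:ℤ)-1 else (k:ℤ)-2) * (if s + y = 0 then (k:ℤ)-2 else -1)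
          else 0) * (if x + t = 0 then (k:ℤ)-2 else -1) := by
      intro y
      by_cases hy0 : y = 0
      · simp [hy0]
      · rw [if_pos ⟨hx, hy0⟩, if_pos hy0]; ring
    rw [Finset.sum_congr rfl fun y _ => hpt y, ← Finset.sum_mul, Ysum x s hx hs]
  calc (∑ x : ZMod k, ∑ b : ZMod k, ∑ y : ZMod k, ∑ d : ZMod k,
        if x ≠ 0 ∧ b ≠ 0 ∧ y ≠ 0 ∧ d ≠ 0 ∧ x + b + y + d = 0 then
          (if s + y = 0 then (k:ℤ)-2 else -1) * (if x + t = 0 then (k:ℤ)-2 else -1) else 0)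
      = ∑ x : ZMod k, ∑ b : ZMod k, ∑ y : ZMod k,
          if x ≠ 0 ∧ b ≠ 0 ∧ y ≠ 0 ∧ x + b + y ≠ 0 then
            (if s + y = 0 then (k:ℤ)-2 else -1) * (if x + t = 0 then (k:ℤ)-2 else -1) else 0 :=
        Finset.sum_congr rfl fun x _ => Finset.sum_congr rfl fun b _ =>
          Finset.sum_congr rfl fun y _ => hd x b y _
    _ = ∑ x : ZMod k, ∑ y : ZMod k, ∑ b : ZMod k,
          if x ≠ 0 ∧ b ≠ 0 ∧ y ≠ 0 ∧ x + b + y ≠ 0 then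
            (if s + y = 0 then (k:ℤ)-2 else -1) * (if x + t = 0 then (k:ℤ)-2 else -1) else 0 :=
        Finset.sum_congr rfl fun x _ => Finset.sum_comm
    _ = ∑ x : ZMod k, ∑ y : ZMod k,
          if x ≠ 0 ∧ y ≠ 0 then (if x + y = 0 then (k:ℤ)-1 else (k:ℤ)-2) *
            ((if s + y = 0 then (k:ℤ)-2 else -1) * (if x + t = 0 then (k:ℤ)-2 else -1)) else 0 :=
        Finset.sum_congr rfl fun x _ => Finset.sum_congr rfl fun y _ => hb x y _
    _ = ∑ x : ZMod k,
          if x ≠ 0 then (if x = s then (k:ℤ)-2 else -1) * (if x + t = 0 then (k:ℤ)-2 else -1)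
          else 0 :=
        Finset.sum_congr rfl fun x _ => hy x
    _ = if s + t = 0 then ((k:ℤ)-1)*((k:ℤ)-2) else -((k:ℤ)-1) := Xsum s t hs ht

end Aux

theorem compatMat_pow_entries (k : ℕ) (hk : 2 ≤ k) (i : ℕ) (hi : 1 ≤ i) :
    letI : NeZero k := ⟨by omega⟩
    ∀ ξ ξ' : VertexConfig k,
      ((compatMat k) ^ i) ξ ξ' =
        if ξ.val.1 + ξ'.val.2.2.1 = 0 then ((k : ℤ) - 1) ^ (i - 1) * ((k : ℤ) - 2)
        else -((k : ℤ) - 1) ^ (i - 1) := by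
  letI : NeZero k := ⟨by omega⟩
  suffices H : ∀ i, 1 ≤ i → ∀ ξ ξ' : VertexConfig k,
      ((compatMat k) ^ i) ξ ξ' =
        if ξ.val.1 + ξ'.val.2.2.1 = 0 then ((k : ℤ) - 1) ^ (i - 1) * ((k : ℤ) - 2)
        else -((k : ℤ) - 1) ^ (i - 1) from H i hi
  intro i
  induction i with
  | zero => omega
  | succ n ih =>
    intro _ ξ ξ'
    rcases Nat.eq_zero_or_pos n with hn | hn
    · subst hn
      simp [pow_one, compatMat]
    · have ih' := ih hn
      rw [pow_succ, Matrix.mul_apply]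
      have hterm : ∀ η : VertexConfig k,
          ((compatMat k) ^ n) ξ η * (compatMat k) η ξ' =
            ((k:ℤ)-1) ^ (n-1) *
              ((if ξ.val.1 + η.val.2.2.1 = 0 then (k:ℤ)-2 else -1) *
                (if η.val.1 + ξ'.val.2.2.1 = 0 then (k:ℤ)-2 else -1)) := by
        intro η
        rw [ih' ξ η]
        simp only [compatMat, Matrix.of_apply]
        split_ifs <;> ring
      rw [Finset.sum_congr rfl fun η _ => hterm η, ← Finset.mul_sum,
        keySum ξ.val.1 ξ'.val.2.2.1 ξ.prop.1 ξ'.prop.2.2.1]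
      have hsucc : ((k:ℤ)-1) ^ (n-1) * ((k:ℤ)-1) = ((k:ℤ)-1) ^ n := by
        have h1 : n - 1 + 1 = n := by omega
        rw [← pow_succ, h1]
      simp only [Nat.add_sub_cancel]
      split_ifs with h
      · rw [← hsucc]; ring
      · rw [← hsucc]; ring
end

section
/- Let k ≥ 2 and m, n ≥ 1 be integers. The number of proper k-colorings of the m×n grid, i.e. functions c : Fin m × Fin n → ZMod k such that c(i+1,j) ≠ c(i,j) whenever i+1 < m and c(i,j+1) ≠ c(i,j) whenever j+1 < n, equals k times the number of pairs (h, v), where h : Fin (m-1) × Fin n → ZMod k and v : Fin m × Fin (n-1) → ZMod k take only nonzero values and satisfy, for every unit square (i.e. all i with i+1 < m and j with j+1 < n), h(i,j) + v(i+1,j) = v(i,j) + h(i,j+1). Moreover, the map sending a proper coloring c to the pair of difference functions h(i,j) = c(i+1,j) - c(i,j) and v(i,j) = c(i,j+1) - c(i,j) is a surjection onto the set of such pairs, each of whose fibers has exactly k elements. -/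
/-- Proper `k`-colorings of the `m × n` grid: adjacent cells (horizontally or
vertically) receive different values of `ZMod k`. -/
def ProperColoring (k m n : ℕ) : Set (Fin m × Fin n → ZMod k) :=
  {c |
    (∀ (i : ℕ) (j : Fin n) (hi : i + 1 < m),
      c (⟨i + 1, hi⟩, j) ≠ c (⟨i, Nat.lt_of_succ_lt hi⟩, j)) ∧
    (∀ (i : Fin m) (j : ℕ) (hj : j + 1 < n),
      c (i, ⟨j + 1, hj⟩) ≠ c (i, ⟨j, Nat.lt_of_succ_lt hj⟩))}

/-- Admissible edge-state configurations: nowhere-zero horizontal and vertical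
edge states satisfying `h(i,j) + v(i+1,j) = v(i,j) + h(i,j+1)` around every
unit square. -/
def Admissible (k m n : ℕ) :
    Set ((Fin (m - 1) × Fin n → ZMod k) × (Fin m × Fin (n - 1) → ZMod k)) :=
  {hv |
    (∀ e, hv.1 e ≠ 0) ∧ (∀ e, hv.2 e ≠ 0) ∧
    ∀ (i j : ℕ) (hi : i + 1 < m) (hj : j + 1 < n),
      hv.1 (⟨i, by omega⟩, ⟨j, by omega⟩) + hv.2 (⟨i + 1, hi⟩, ⟨j, by omega⟩) =
        hv.2 (⟨i, by omega⟩, ⟨j, by omega⟩) + hv.1 (⟨i, by omega⟩, ⟨j + 1, hj⟩)}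

/-- The map sending a coloring to its pair of difference functions
`h(i,j) = c(i+1,j) - c(i,j)` and `v(i,j) = c(i,j+1) - c(i,j)`. -/
def diffMap (k m n : ℕ) (c : Fin m × Fin n → ZMod k) :
    (Fin (m - 1) × Fin n → ZMod k) × (Fin m × Fin (n - 1) → ZMod k) :=
  (fun e => c (⟨e.1.1 + 1, by have := e.1.isLt; omega⟩, e.2) -
      c (⟨e.1.1, by have := e.1.isLt; omega⟩, e.2),
   fun e => c (e.1, ⟨e.2.1 + 1, by have := e.2.isLt; omega⟩) -
      c (e.1, ⟨e.2.1, by have := e.2.isLt; omega⟩))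


section Aux
variable {k m n : ℕ}

/-- Horizontal edge states extended to ℕ×ℕ by zero. -/
def Hf (hv : (Fin (m - 1) × Fin n → ZMod k) × (Fin m × Fin (n - 1) → ZMod k))
    (i j : ℕ) : ZMod k :=
  if h : i < m - 1 ∧ j < n then hv.1 (⟨i, h.1⟩, ⟨j, h.2⟩) else 0

def Vf (hv : (Fin (m - 1) × Fin n → ZMod k) × (Fin m × Fin (n - 1) → ZMod k))
    (i j : ℕ) : ZMod k :=
  if h : i < m ∧ j < n - 1 then hv.2 (⟨i, h.1⟩, ⟨j, h.2⟩) else 0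

def recon (a : ZMod k)
    (hv : (Fin (m - 1) × Fin n → ZMod k) × (Fin m × Fin (n - 1) → ZMod k))
    (p : Fin m × Fin n) : ZMod k :=
  a + ∑ x ∈ Finset.range p.1.1, Hf hv x 0 + ∑ x ∈ Finset.range p.2.1, Vf hv p.1.1 x

lemma Hf_eq (hv) (i j : ℕ) (h1 : i + 1 < m) (h2 : j < n) :
    Hf (k := k) (m := m) (n := n) hv i j = hv.1 (⟨i, by omega⟩, ⟨j, h2⟩) := by
  unfold Hf; rw [dif_pos ⟨by omega, h2⟩]

lemma Vf_eq (hv) (i j : ℕ) (h1 : i < m) (h2 : j + 1 < n) :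
    Vf (k := k) (m := m) (n := n) hv i j = hv.2 (⟨i, h1⟩, ⟨j, by omega⟩) := by
  unfold Vf; rw [dif_pos ⟨h1, by omega⟩]

lemma recon_vert (a : ZMod k) (hv) (i : Fin m) (j : ℕ) (hj : j + 1 < n) :
    recon a hv (i, ⟨j + 1, hj⟩) =
      recon a hv (i, ⟨j, by omega⟩) + Vf hv i.1 j := by
  unfold recon
  simp [Finset.sum_range_succ]
  ring

lemma recon_horiz (a : ZMod k) (hv) (hadm : hv ∈ Admissible k m n) :
    ∀ (j : ℕ) (hj : j < n) (i : ℕ) (hi : i + 1 < m),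
      recon a hv (⟨i + 1, hi⟩, ⟨j, hj⟩) =
        recon a hv (⟨i, by omega⟩, ⟨j, hj⟩) + Hf hv i j := by
  intro j
  induction j with
  | zero =>
    intro _ i hi
    unfold recon
    simp [Finset.sum_range_succ]
    ring
  | succ j ih =>
    intro hj i hi
    have hjn : j < n := by omega
    have sq := hadm.2.2 i j hi hj
    rw [recon_vert a hv ⟨i + 1, hi⟩ j hj, recon_vert a hv ⟨i, by omega⟩ j hj,
      ih hjn i hi,
      Hf_eq hv i j hi hjn, Hf_eq hv i (j+1) hi hj,
      Vf_eq hv (i+1) j (by omega) hj, Vf_eq hv i j (by omega) hj]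
    linear_combination sq

lemma recon_zero (a : ZMod k) (hv) (hm : 1 ≤ m) (hn : 1 ≤ n) :
    recon a hv (⟨0, hm⟩, ⟨0, hn⟩) = a := by
  simp [recon]

lemma diff_recon (a : ZMod k) (hv) (hadm : hv ∈ Admissible k m n) :
    diffMap k m n (recon a hv) = hv := by
  unfold diffMap
  ext e
  · obtain ⟨⟨i, hi⟩, ⟨j, hj⟩⟩ := e
    simp only
    rw [recon_horiz a hv hadm j hj i (by omega), Hf_eq hv i j (by omega) hj]
    ring
  · obtain ⟨⟨i, hi⟩, ⟨j, hj⟩⟩ := e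
    simp only
    rw [recon_vert a hv ⟨i, hi⟩ j (by omega), Vf_eq hv i j hi (by omega)]
    ring

lemma recon_proper (a : ZMod k) (hv) (hadm : hv ∈ Admissible k m n) :
    recon a hv ∈ ProperColoring k m n := by
  constructor
  · intro i j hi
    have : (⟨j.1, j.2⟩ : Fin n) = j := rfl
    rw [← this, recon_horiz a hv hadm j.1 j.2 i hi, Hf_eq hv i j.1 hi j.2]
    intro h
    have h2 := h.symm
    rw [left_eq_add] at h2
    exact hadm.1 _ h2
  · intro i j hj
    rw [recon_vert a hv i j hj, Vf_eq hv i.1 j i.2 hj]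
    intro h
    have h2 := h.symm
    rw [left_eq_add] at h2
    exact hadm.2.1 _ h2

lemma diff_mem (c : Fin m × Fin n → ZMod k) (hc : c ∈ ProperColoring k m n) :
    diffMap k m n c ∈ Admissible k m n := by
  refine ⟨fun e => ?_, fun e => ?_, fun i j hi hj => ?_⟩
  · exact sub_ne_zero_of_ne (hc.1 e.1.1 e.2 (by have := e.1.isLt; omega))
  · exact sub_ne_zero_of_ne (hc.2 e.1 e.2.1 (by have := e.2.isLt; omega))
  · simp only [diffMap]
    ring

lemma eq_of_diff (hm : 1 ≤ m) (hn : 1 ≤ n)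
    (c d : Fin m × Fin n → ZMod k)
    (h1 : diffMap k m n c = diffMap k m n d)
    (h0 : c (⟨0, hm⟩, ⟨0, hn⟩) = d (⟨0, hm⟩, ⟨0, hn⟩)) : c = d := by
  have hH : ∀ (i j : ℕ) (hi : i + 1 < m) (hj : j < n),
      c (⟨i + 1, hi⟩, ⟨j, hj⟩) - c (⟨i, by omega⟩, ⟨j, hj⟩) =
      d (⟨i + 1, hi⟩, ⟨j, hj⟩) - d (⟨i, by omega⟩, ⟨j, hj⟩) := by
    intro i j hi hj
    exact congrFun (congrArg Prod.fst h1) (⟨i, by omega⟩, ⟨j, hj⟩)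
  have hV : ∀ (i j : ℕ) (hi : i < m) (hj : j + 1 < n),
      c (⟨i, hi⟩, ⟨j + 1, hj⟩) - c (⟨i, hi⟩, ⟨j, by omega⟩) =
      d (⟨i, hi⟩, ⟨j + 1, hj⟩) - d (⟨i, hi⟩, ⟨j, by omega⟩) := by
    intro i j hi hj
    exact congrFun (congrArg Prod.snd h1) (⟨i, hi⟩, ⟨j, by omega⟩)
  have col0 : ∀ (i : ℕ) (hi : i < m), c (⟨i, hi⟩, ⟨0, hn⟩) = d (⟨i, hi⟩, ⟨0, hn⟩) := by
    intro i
    induction i with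
    | zero => intro _; exact h0
    | succ i ih =>
      intro hi
      have h := hH i 0 hi hn
      have h' := ih (by omega)
      linear_combination h + h'
  have key : ∀ (j i : ℕ) (hi : i < m) (hj : j < n),
      c (⟨i, hi⟩, ⟨j, hj⟩) = d (⟨i, hi⟩, ⟨j, hj⟩) := by
    intro j
    induction j with
    | zero => intro i hi _; exact col0 i hi
    | succ j ih =>
      intro i hi hj
      have h := hV i j hi hj
      have h' := ih i hi (by omega)
      linear_combination h + h'
  funext p
  obtain ⟨⟨i, hi⟩, ⟨j, hj⟩⟩ := p
  exact key j i hi hj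

end Aux

/-- The number of proper `k`-colorings of the `m × n` grid is `k` times the
number of admissible edge-state configurations; indeed the difference map is a
surjection from proper colorings onto admissible edge-state configurations all
of whose fibers have exactly `k` elements. -/
theorem grid_colorings_eq_k_mul_vertex (k m n : ℕ) (hk : 2 ≤ k)
    (hm : 1 ≤ m) (hn : 1 ≤ n) :
    Nat.card (ProperColoring k m n) = k * Nat.card (Admissible k m n) ∧
    diffMap k m n '' ProperColoring k m n = Admissible k m n ∧
    ∀ hv ∈ Admissible k m n,
      Nat.card {c : Fin m × Fin n → ZMod k //
        c ∈ ProperColoring k m n ∧ diffMap k m n c = hv} = k := by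
  have himg : diffMap k m n '' ProperColoring k m n = Admissible k m n := by
    apply Set.Subset.antisymm
    · rintro _ ⟨c, hc, rfl⟩; exact diff_mem c hc
    · intro hv hadm
      exact ⟨recon 0 hv, recon_proper 0 hv hadm, diff_recon 0 hv hadm⟩
  have hfib : ∀ hv ∈ Admissible k m n,
      Nat.card {c : Fin m × Fin n → ZMod k //
        c ∈ ProperColoring k m n ∧ diffMap k m n c = hv} = k := by
    intro hv hadm
    have e : {c : Fin m × Fin n → ZMod k //
        c ∈ ProperColoring k m n ∧ diffMap k m n c = hv} ≃ ZMod k :=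
      { toFun := fun c => c.1 (⟨0, hm⟩, ⟨0, hn⟩)
        invFun := fun a => ⟨recon a hv, recon_proper a hv hadm, diff_recon a hv hadm⟩
        left_inv := fun c => Subtype.ext (eq_of_diff hm hn _ _
          (by rw [diff_recon _ _ hadm, c.2.2]) (recon_zero _ hv hm hn))
        right_inv := fun a => recon_zero a hv hm hn }
    rw [Nat.card_congr e, Nat.card_zmod]
  refine ⟨?_, himg, hfib⟩
  have E : (ProperColoring k m n) ≃ ZMod k × (Admissible k m n) :=
    { toFun := fun c => (c.1 (⟨0, hm⟩, ⟨0, hn⟩), ⟨diffMap k m n c.1, diff_mem c.1 c.2⟩)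
      invFun := fun p => ⟨recon p.1 p.2.1, recon_proper p.1 p.2.1 p.2.2⟩
      left_inv := fun c => Subtype.ext (eq_of_diff hm hn _ _
        (by rw [diff_recon _ _ (diff_mem c.1 c.2)]) (recon_zero _ _ hm hn))
      right_inv := fun p => by
        obtain ⟨a, hv, hadm⟩ := p
        exact Prod.ext (recon_zero a hv hm hn) (Subtype.ext (diff_recon a hv hadm)) }
  rw [Nat.card_congr E, Nat.card_prod, Nat.card_zmod]
end
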